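/- Let f : ℝ^d → [0,∞] be convex with f(0) = 0 and f(x) ≥ ‖x‖²/2 for all x. Then for every t > 0 and all x, f*(x) ≤ (f + t·h)*(x) + 4t·h(x), where h(x) = ‖x‖²/2 and f* is the Legendre–Fenchel transform. -/

import Mathlib

open scoped RealInnerProductSpace ENNReal NNReal

noncomputable section

/-- The Legendre–Fenchel transform of an `[0,∞]`-valued function:
`f*(x) = sup_y (⟨x,y⟩ − f(y))` (the supremum is non-negative since `f ≥ 0`, `f(0)=0`). -/
def legE {d : ℕ} (f : EuclideanSpace ℝ (Fin d) → ℝ≥0∞) (x : EuclideanSpace ℝ (Fin d)) :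
    ℝ≥0∞ :=
  ⨆ y, ENNReal.ofReal ⟪x, y⟫ - f y

/-- Convexity for `[0,∞]`-valued functions. -/
def ConvexE {d : ℕ} (f : EuclideanSpace ℝ (Fin d) → ℝ≥0∞) : Prop :=
  ∀ x y : EuclideanSpace ℝ (Fin d), ∀ a b : ℝ≥0, a + b = 1 →
    f ((a : ℝ) • x + (b : ℝ) • y) ≤ a * f x + b * f y

/-- The self-polar function `h(x) = ‖x‖²/2` as an `[0,∞]`-valued function. -/
def hE {d : ℕ} (x : EuclideanSpace ℝ (Fin d)) : ℝ≥0∞ := ENNReal.ofReal (‖x‖ ^ 2 / 2)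

/-- If `f : ℝ^d → [0,∞]` is convex with `f(0)=0` and `f ≥ h` where `h(x)=‖x‖²/2`, then for
every `t > 0` and all `x`, `f*(x) ≤ (f + t h)*(x) + 4 t h(x)`. -/
theorem legendre_perturbation_bound {d : ℕ}
    (f : EuclideanSpace ℝ (Fin d) → ℝ≥0∞) (hconv : ConvexE f) (hf0 : f 0 = 0)
    (hlb : ∀ x, hE x ≤ f x) (t : ℝ) (ht : 0 < t) :
    ∀ x, legE f x ≤ legE (fun y => f y + ENNReal.ofReal t * hE y) x
        + 4 * ENNReal.ofReal t * hE x := by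
  intro x
  rw [legE]
  apply iSup_le
  intro y
  by_cases hc : ENNReal.ofReal ⟪x, y⟫ ≤ f y
  · rw [tsub_eq_zero_of_le hc]
    exact zero_le
  · push_neg at hc
    have h1 : hE y < ENNReal.ofReal ⟪x, y⟫ := lt_of_le_of_lt (hlb y) hc
    have hy2 : ‖y‖ ^ 2 / 2 ≤ ⟪x, y⟫ := by
      by_contra h
      push_neg at h
      exact absurd (ENNReal.ofReal_le_ofReal h.le) (not_le.2 h1)
    have hip : ⟪x, y⟫ ≤ ‖x‖ * ‖y‖ := real_inner_le_norm x y
    have hhy : hE y ≤ 4 * hE x := by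
      rw [hE, hE, show (4 : ℝ≥0∞) = ENNReal.ofReal 4 by norm_num,
        ← ENNReal.ofReal_mul (by norm_num)]
      apply ENNReal.ofReal_le_ofReal
      nlinarith [norm_nonneg y, norm_nonneg x, sq_nonneg (‖y‖ - 2 * ‖x‖)]
    have key : ∀ a b c : ℝ≥0∞, a - b ≤ (a - (b + c)) + c := by
      intro a b c
      rw [tsub_le_iff_right]
      calc a ≤ a - (b + c) + (b + c) := le_tsub_add
        _ = a - (b + c) + c + b := by ring
    calc ENNReal.ofReal ⟪x, y⟫ - f y
        ≤ (ENNReal.ofReal ⟪x, y⟫ - (f y + ENNReal.ofReal t * hE y))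
            + ENNReal.ofReal t * hE y := key _ _ _
      _ ≤ legE (fun y => f y + ENNReal.ofReal t * hE y) x
            + 4 * ENNReal.ofReal t * hE x := by
          refine add_le_add
            (le_iSup (fun z => ENNReal.ofReal ⟪x, z⟫ - (f z + ENNReal.ofReal t * hE z)) y) ?_
          calc ENNReal.ofReal t * hE y ≤ ENNReal.ofReal t * (4 * hE x) :=
                  mul_le_mul_right hhy _
              _ = 4 * ENNReal.ofReal t * hE x := by ring
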